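/- For every real t with 0 ≤ t < 3/(4+√6) there exists a constant D₁ > 0, depending only on t, such that the following holds. Let (X, μ) be a probability measure space, let ψ₁,…,ψ_n ∈ L²(μ) be orthonormal, let u ∈ L²(μ) with ‖u‖_{L²} > 0, let c̃ ∈ ℝⁿ and set ũ := ∑_{k=1}^n c̃_k ψ_k. Let D be a real N×n matrix with ‖DᵀD − I‖ ≤ t in the ℓ²-operator norm, let y ∈ ℝᴺ and η ≥ 0 satisfy ‖Dc̃ − y‖₂ ≤ η and η ≤ ‖u − ũ‖_{L²}, and let ĉ be any Basis Pursuit Denoising solution at level η, with û := ∑_{k=1}^n ĉ_k ψ_k. Then ‖u − û‖_{L²}/‖u‖_{L²} ≤ D₁·‖u − ũ‖_{L²}/‖u‖_{L²}. -/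

import Mathlib

open MeasureTheory Matrix

/-- The ℓ¹-norm of a finitely supported real vector. -/
noncomputable def l1norm {ι : Type*} [Fintype ι] (x : ι → ℝ) : ℝ := ∑ i, |x i|

/-- The ℓ²-norm of a finitely supported real vector. -/
noncomputable def l2norm {ι : Type*} [Fintype ι] (x : ι → ℝ) : ℝ := Real.sqrt (∑ i, (x i) ^ 2)

/-- `chat` is a Basis Pursuit Denoising solution at noise level `η`. -/
def IsBPDNSolution {ι κ : Type*} [Fintype ι] [Fintype κ]
    (D : Matrix ι κ ℝ) (y : ι → ℝ) (η : ℝ) (chat : κ → ℝ) : Prop :=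
  l2norm (D.mulVec chat - y) ≤ η ∧
    ∀ c : κ → ℝ, l2norm (D.mulVec c - y) ≤ η → l1norm chat ≤ l1norm c

/-- The ℓ²-operator (spectral) norm of a square real matrix. -/
noncomputable def opNorm {ι : Type*} [Fintype ι] [DecidableEq ι] (A : Matrix ι ι ℝ) : ℝ :=
  ‖LinearMap.toContinuousLinearMap (Matrix.toEuclideanLin A)‖

lemma l2norm_eq {m : ℕ} (x : Fin m → ℝ) :
    l2norm x = ‖(WithLp.equiv 2 (Fin m → ℝ)).symm x‖ := by
  simp [l2norm, EuclideanSpace.norm_eq, Real.norm_eq_abs, sq_abs]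

lemma l2norm_nonneg {m : ℕ} (x : Fin m → ℝ) : 0 ≤ l2norm x := Real.sqrt_nonneg _

lemma l2norm_sub_le {m : ℕ} (x y : Fin m → ℝ) : l2norm (x - y) ≤ l2norm x + l2norm y := by
  rw [l2norm_eq, l2norm_eq, l2norm_eq]
  rw [show (WithLp.equiv 2 (Fin m → ℝ)).symm (x - y)
      = (WithLp.equiv 2 (Fin m → ℝ)).symm x - (WithLp.equiv 2 (Fin m → ℝ)).symm y from rfl]
  exact norm_sub_le _ _

lemma l2norm_sq {m : ℕ} (x : Fin m → ℝ) : l2norm x ^ 2 = ∑ i, (x i) ^ 2 := by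
  rw [l2norm, Real.sq_sqrt]
  positivity

lemma isometry_lower {N n : ℕ} (D : Matrix (Fin N) (Fin n) ℝ) {t : ℝ}
    (hD : opNorm (Dᵀ * D - 1) ≤ t) (c : Fin n → ℝ) :
    (1 - t) * l2norm c ^ 2 ≤ l2norm (D.mulVec c) ^ 2 := by
  set M : Matrix (Fin n) (Fin n) ℝ := Dᵀ * D - 1 with hM
  set xc : EuclideanSpace ℝ (Fin n) := (WithLp.equiv 2 (Fin n → ℝ)).symm c with hxc
  have hdot : l2norm (D.mulVec c) ^ 2 = l2norm c ^ 2 + c ⬝ᵥ (M.mulVec c) := by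
    have h1 : l2norm (D.mulVec c) ^ 2 = (D.mulVec c) ⬝ᵥ (D.mulVec c) := by
      rw [l2norm_sq]; simp [dotProduct, sq]
    have h2 : (D.mulVec c) ⬝ᵥ (D.mulVec c) = c ⬝ᵥ ((Dᵀ * D).mulVec c) := by
      rw [← Matrix.mulVec_mulVec, Matrix.dotProduct_mulVec c, Matrix.vecMul_transpose]
    have h3 : (Dᵀ * D).mulVec c = M.mulVec c + c := by
      rw [hM, Matrix.sub_mulVec, Matrix.one_mulVec, sub_add_cancel]
    rw [h1, h2, h3, dotProduct_add]
    have : c ⬝ᵥ c = l2norm c ^ 2 := by rw [l2norm_sq]; simp [dotProduct, sq]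
    rw [this]; ring
  have hcs : |c ⬝ᵥ (M.mulVec c)| ≤ t * l2norm c ^ 2 := by
    have hinner : c ⬝ᵥ (M.mulVec c)
        = @inner ℝ _ _ xc ((WithLp.equiv 2 (Fin n → ℝ)).symm (M.mulVec c)) := by
      simp [PiLp.inner_apply, dotProduct, RCLike.inner_apply, hxc, mul_comm]
    rw [hinner]
    have hnorm : ‖(WithLp.equiv 2 (Fin n → ℝ)).symm (M.mulVec c)‖ ≤ t * ‖xc‖ := by
      have heq : (LinearMap.toContinuousLinearMap (Matrix.toEuclideanLin M)) xc
          = (WithLp.equiv 2 (Fin n → ℝ)).symm (M.mulVec c) := rfl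
      rw [← heq]
      exact ((LinearMap.toContinuousLinearMap (Matrix.toEuclideanLin M)).le_opNorm xc).trans
        (mul_le_mul_of_nonneg_right hD (norm_nonneg xc))
    calc |@inner ℝ _ _ xc ((WithLp.equiv 2 (Fin n → ℝ)).symm (M.mulVec c))|
        ≤ ‖xc‖ * ‖(WithLp.equiv 2 (Fin n → ℝ)).symm (M.mulVec c)‖ := abs_real_inner_le_norm _ _
      _ ≤ ‖xc‖ * (t * ‖xc‖) := mul_le_mul_of_nonneg_left hnorm (norm_nonneg xc)
      _ = t * l2norm c ^ 2 := by rw [l2norm_eq]; ring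
  nlinarith [abs_le.mp hcs]

lemma orthonormal_norm_sum {X : Type} [MeasurableSpace X] {μ : Measure X} {n : ℕ}
    {ψ : Fin n → Lp ℝ 2 μ} (hψ : Orthonormal ℝ ψ) (a : Fin n → ℝ) :
    ‖∑ k, a k • ψ k‖ = l2norm a := by
  have h := hψ.inner_sum a a Finset.univ
  have h2 : ‖∑ k, a k • ψ k‖ ^ 2 = ∑ i, (a i) ^ 2 := by
    rw [← real_inner_self_eq_norm_sq, h]
    simp [sq]
  rw [l2norm, ← h2, Real.sqrt_sq (norm_nonneg _)]

/-- Corollary 4.8 (non-sparse recovery), deterministic content: under the isometry condition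
`‖DᵀD − I‖ ≤ t < 3/(4+√6)`, the relative L² error of the BPDN surrogate is controlled by the
relative truncation error, with no sparsity assumption. -/
theorem non_sparse_recovery_rrmse :
    ∀ t : ℝ, 0 ≤ t → t < 3 / (4 + Real.sqrt 6) →
    ∃ D₁ : ℝ, 0 < D₁ ∧
      ∀ (X : Type) (_ : MeasurableSpace X) (μ : Measure X), IsProbabilityMeasure μ →
      ∀ (n N : ℕ),
      ∀ ψ : Fin n → Lp ℝ 2 μ, Orthonormal ℝ ψ →
      ∀ u : Lp ℝ 2 μ, 0 < ‖u‖ →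
      ∀ ctil : Fin n → ℝ,
      ∀ D : Matrix (Fin N) (Fin n) ℝ, opNorm (Dᵀ * D - 1) ≤ t →
      ∀ (y : Fin N → ℝ) (η : ℝ), 0 ≤ η →
        l2norm (D.mulVec ctil - y) ≤ η →
        η ≤ ‖u - ∑ k, ctil k • ψ k‖ →
      ∀ chat : Fin n → ℝ, IsBPDNSolution D y η chat →
        ‖u - ∑ k, chat k • ψ k‖ / ‖u‖ ≤ D₁ * ‖u - ∑ k, ctil k • ψ k‖ / ‖u‖ := by
  intro t ht ht'
  have hsqrt6 : (0:ℝ) ≤ Real.sqrt 6 := Real.sqrt_nonneg 6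
  have ht1 : t < 1 := by
    have : 3 / (4 + Real.sqrt 6) ≤ 1 := by
      rw [div_le_one (by linarith)]; linarith
    linarith
  set s := Real.sqrt (1 - t) with hs
  have hspos : 0 < s := Real.sqrt_pos.mpr (by linarith)
  refine ⟨1 + 2 / s, by positivity, ?_⟩
  intro X _ μ _ n N ψ hψ u hu ctil D hD y η hη hfeas hηE chat hchat
  set E := ‖u - ∑ k, ctil k • ψ k‖ with hE
  have hE0 : 0 ≤ E := norm_nonneg _
  -- l2 bound on D (chat - ctil)
  have hkey : l2norm (D.mulVec (chat - ctil)) ≤ 2 * η := by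
    have heq : D.mulVec (chat - ctil) = (D.mulVec chat - y) - (D.mulVec ctil - y) := by
      rw [Matrix.mulVec_sub]; abel
    rw [heq]
    calc l2norm ((D.mulVec chat - y) - (D.mulVec ctil - y))
        ≤ l2norm (D.mulVec chat - y) + l2norm (D.mulVec ctil - y) := l2norm_sub_le _ _
      _ ≤ η + η := add_le_add hchat.1 hfeas
      _ = 2 * η := by ring
  -- lower isometry
  have hiso := isometry_lower D hD (chat - ctil)
  have hLle : l2norm (chat - ctil) ≤ 2 * η / s := by
    rw [le_div_iff₀ hspos]
    have hsq : (l2norm (chat - ctil) * s) ^ 2 ≤ (2 * η) ^ 2 := by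
      have h1 : (l2norm (chat - ctil) * s) ^ 2 = (1 - t) * l2norm (chat - ctil) ^ 2 := by
        rw [mul_pow, hs, Real.sq_sqrt (by linarith)]; ring
      have h2 : l2norm (D.mulVec (chat - ctil)) ^ 2 ≤ (2 * η) ^ 2 := by
        have := l2norm_nonneg (D.mulVec (chat - ctil))
        nlinarith
      linarith [hiso]
    have h3 : 0 ≤ l2norm (chat - ctil) * s :=
      mul_nonneg (l2norm_nonneg _) hspos.le
    nlinarith
  -- assemble
  have hdiff : ‖(∑ k, chat k • ψ k) - ∑ k, ctil k • ψ k‖ = l2norm (chat - ctil) := by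
    rw [← orthonormal_norm_sum hψ (chat - ctil)]
    congr 1
    rw [← Finset.sum_sub_distrib]
    exact Finset.sum_congr rfl fun k _ => by rw [Pi.sub_apply, sub_smul]
  have htri : ‖u - ∑ k, chat k • ψ k‖ ≤ E + l2norm (chat - ctil) := by
    calc ‖u - ∑ k, chat k • ψ k‖
        = ‖(u - ∑ k, ctil k • ψ k) - ((∑ k, chat k • ψ k) - ∑ k, ctil k • ψ k)‖ := by
          congr 1; abel
      _ ≤ E + ‖(∑ k, chat k • ψ k) - ∑ k, ctil k • ψ k‖ := norm_sub_le _ _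
      _ = E + l2norm (chat - ctil) := by rw [hdiff]
  have hfinal : ‖u - ∑ k, chat k • ψ k‖ ≤ (1 + 2 / s) * E := by
    have h2η : 2 * η / s ≤ 2 * E / s := by
      gcongr
    calc ‖u - ∑ k, chat k • ψ k‖ ≤ E + l2norm (chat - ctil) := htri
      _ ≤ E + 2 * η / s := by linarith
      _ ≤ E + 2 * E / s := by linarith
      _ = (1 + 2 / s) * E := by field_simp
  exact div_le_div_of_nonneg_right hfinal hu.le
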